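/- arXiv:1912.07658 — 2 statements merged into one kernel-verified Lean document; each statement's English description precedes it below -/
import Mathlib

section
/- Let N ≥ 3 be an integer, W the ground state on ℝ^N, and ℓ ∈ ℝ^N with |ℓ| < 1. Then the 𝓗 = Ḣ¹ × L² norm of the initial data of the traveling wave satisfies ‖(W_ℓ(0,·), ∂_t W_ℓ(0,·))‖²_𝓗 = ((N + (2-N)|ℓ|²)/(N√(1-|ℓ|²))) ‖W‖²_{Ḣ¹}. In particular, this quantity tends to +∞ as |ℓ| → 1. -/
open MeasureTheory Filter
open scoped RealInnerProductSpace Topology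

/-- The ground state `W(x) = (1 + |x|²/(N(N-2)))^{1-N/2}` on `ℝ^N`. -/
noncomputable def groundStateW (N : ℕ) (x : EuclideanSpace ℝ (Fin N)) : ℝ :=
  (1 + ‖x‖ ^ 2 / (N * (N - 2))) ^ ((1 : ℝ) - N / 2)

/-- The traveling wave `W_ℓ`, i.e. the Lorentz transform with velocity `ℓ` of the
stationary solution `W` (for the stationary `W`, only the spatial part of the
Lorentz change of variables matters). -/
noncomputable def travelingW (N : ℕ) (ℓ : EuclideanSpace ℝ (Fin N)) (t : ℝ)
    (x : EuclideanSpace ℝ (Fin N)) : ℝ :=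
  groundStateW N
    (((-t / Real.sqrt (1 - ‖ℓ‖ ^ 2)
        + 1 / ‖ℓ‖ ^ 2 * (1 / Real.sqrt (1 - ‖ℓ‖ ^ 2) - 1) * ⟪ℓ, x⟫) • ℓ) + x)

/-- The squared `𝓗 = Ḣ¹ × L²` norm of the initial data `(W_ℓ(0), ∂_t W_ℓ(0))`. -/
noncomputable def travelingWHnormSq (N : ℕ) (ℓ : EuclideanSpace ℝ (Fin N)) : ℝ :=
  ∫ x : EuclideanSpace ℝ (Fin N),
    (‖fderiv ℝ (travelingW N ℓ 0) x‖ ^ 2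
      + (deriv (fun t => travelingW N ℓ t x) 0) ^ 2)

namespace TW
variable {N : ℕ}

noncomputable def gg (N : ℕ) (x : EuclideanSpace ℝ (Fin N)) : ℝ :=
  1 + ‖x‖ ^ 2 / ((N : ℝ) * ((N : ℝ) - 2))

lemma groundStateW_eq (x : EuclideanSpace ℝ (Fin N)) :
    groundStateW N x = gg N x ^ ((1:ℝ) - N/2) := rfl

lemma c_pos (hN : 3 ≤ N) : (0:ℝ) < (N : ℝ) * ((N : ℝ) - 2) := by
  have h3 : (3:ℝ) ≤ N := by exact_mod_cast hN
  nlinarith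

lemma one_le_gg (hN : 3 ≤ N) (x : EuclideanSpace ℝ (Fin N)) : 1 ≤ gg N x := by
  have := c_pos hN
  have : 0 ≤ ‖x‖ ^ 2 / ((N : ℝ) * ((N : ℝ) - 2)) := by positivity
  simp only [gg]; linarith

lemma gg_pos (hN : 3 ≤ N) (x : EuclideanSpace ℝ (Fin N)) : 0 < gg N x :=
  lt_of_lt_of_le one_pos (one_le_gg hN x)

lemma hasFDerivAt_groundStateW (hN : 3 ≤ N) (x : EuclideanSpace ℝ (Fin N)) :
    HasFDerivAt (groundStateW N)
      ((-(N:ℝ)⁻¹ * gg N x ^ (-(N:ℝ)/2)) • (innerSL ℝ x)) x := by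
  have hc := c_pos hN
  have hg := gg_pos hN x
  have h0 : HasFDerivAt (fun y : EuclideanSpace ℝ (Fin N) => ‖y‖ ^ 2)
      (2 • innerSL ℝ x) x := (hasStrictFDerivAt_norm_sq x).hasFDerivAt
  have h1 : HasFDerivAt (gg N)
      ((((N:ℝ) * ((N:ℝ) - 2))⁻¹ * 2) • innerSL ℝ x) x := by
    have h1' := (h0.const_mul (((N:ℝ) * ((N:ℝ) - 2))⁻¹)).const_add 1
    have heq : (fun y : EuclideanSpace ℝ (Fin N) =>
        1 + ((N:ℝ) * ((N:ℝ) - 2))⁻¹ * ‖y‖ ^ 2) = gg N := by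
      funext y; simp [gg, div_eq_inv_mul]
    rw [heq] at h1'
    have heq2 : ((((N:ℝ) * ((N:ℝ) - 2))⁻¹ * 2) • innerSL ℝ x)
        = ((((N:ℝ) * ((N:ℝ) - 2))⁻¹ : ℝ) • (2:ℕ) • innerSL ℝ x) := by
      ext w
      simp [mul_assoc, mul_comm]
      ring
    rw [heq2]; exact h1'
  have h2 : HasDerivAt (fun s : ℝ => s ^ ((1:ℝ) - N/2))
      (((1:ℝ) - N/2) * gg N x ^ ((1:ℝ) - N/2 - 1)) (gg N x) :=
    Real.hasDerivAt_rpow_const (Or.inl hg.ne')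
  have h3 := h2.comp_hasFDerivAt x h1
  have hN0 : (N:ℝ) ≠ 0 := by positivity
  have hN2 : (N:ℝ) - 2 ≠ 0 := by
    have h3' : (3:ℝ) ≤ N := by exact_mod_cast hN
    linarith
  have hexp : (1:ℝ) - N/2 - 1 = -(N:ℝ)/2 := by ring
  have hcoef : (((1:ℝ) - N/2) * gg N x ^ ((1:ℝ) - N/2 - 1)) •
        (((((N:ℝ) * ((N:ℝ) - 2)))⁻¹ * 2) • innerSL ℝ x)
      = (-(N:ℝ)⁻¹ * gg N x ^ (-(N:ℝ)/2)) • innerSL ℝ x := by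
    rw [smul_smul, hexp]
    congr 1
    field_simp
    ring
  rw [← hcoef]
  exact h3


noncomputable def Amap (N : ℕ) (ℓ : EuclideanSpace ℝ (Fin N)) :
    EuclideanSpace ℝ (Fin N) →L[ℝ] EuclideanSpace ℝ (Fin N) :=
  ContinuousLinearMap.id ℝ _ +
    ((1 / ‖ℓ‖ ^ 2 * (1 / Real.sqrt (1 - ‖ℓ‖ ^ 2) - 1)) • innerSL ℝ ℓ).smulRight ℓ

lemma Amap_apply (ℓ x : EuclideanSpace ℝ (Fin N)) :
    Amap N ℓ x = x + (1 / ‖ℓ‖ ^ 2 * (1 / Real.sqrt (1 - ‖ℓ‖ ^ 2) - 1) * ⟪ℓ, x⟫) • ℓ := by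
  simp [Amap, ContinuousLinearMap.smulRight_apply, mul_smul]

lemma travelingW_zero_eq (ℓ x : EuclideanSpace ℝ (Fin N)) :
    travelingW N ℓ 0 x = groundStateW N (Amap N ℓ x) := by
  rw [travelingW, Amap_apply]
  norm_num [add_comm]

lemma innerSL_comp_Amap (ℓ v : EuclideanSpace ℝ (Fin N)) :
    (innerSL ℝ v).comp (Amap N ℓ) = innerSL ℝ (Amap N ℓ v) := by
  ext w
  simp only [ContinuousLinearMap.coe_comp', Function.comp_apply, innerSL_apply_apply, Amap_apply,
    inner_add_left, inner_add_right, real_inner_smul_left, real_inner_smul_right]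
  rw [real_inner_comm v ℓ]
  ring

lemma hasFDerivAt_travelingW0 (hN : 3 ≤ N) (ℓ x : EuclideanSpace ℝ (Fin N)) :
    HasFDerivAt (travelingW N ℓ 0)
      ((-(N:ℝ)⁻¹ * gg N (Amap N ℓ x) ^ (-(N:ℝ)/2)) •
        innerSL ℝ (Amap N ℓ (Amap N ℓ x))) x := by
  have h := (hasFDerivAt_groundStateW hN (Amap N ℓ x)).comp x (Amap N ℓ).hasFDerivAt
  have hfun : (groundStateW N ∘ (Amap N ℓ)) = travelingW N ℓ 0 := by
    funext y; exact (travelingW_zero_eq ℓ y).symm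
  rw [hfun] at h
  rwa [ContinuousLinearMap.smul_comp, innerSL_comp_Amap] at h

lemma hasDerivAt_travelingW_t (hN : 3 ≤ N) (ℓ x : EuclideanSpace ℝ (Fin N)) :
    HasDerivAt (fun t => travelingW N ℓ t x)
      ((-(N:ℝ)⁻¹ * gg N (Amap N ℓ x) ^ (-(N:ℝ)/2)) *
        (-(Real.sqrt (1 - ‖ℓ‖ ^ 2))⁻¹ * ⟪Amap N ℓ x, ℓ⟫)) 0 := by
  set s := Real.sqrt (1 - ‖ℓ‖ ^ 2) with hs
  set k := 1 / ‖ℓ‖ ^ 2 * (1 / s - 1) * ⟪ℓ, x⟫ with hk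
  have h1 : HasDerivAt (fun t : ℝ => -t / s + k) (-s⁻¹) 0 := by
    simpa [neg_div] using (((hasDerivAt_id (0:ℝ)).neg.div_const s).add_const k)
  have hφ : HasDerivAt (fun t : ℝ => (-t / s + k) • ℓ + x) ((-s⁻¹) • ℓ) 0 :=
    (h1.smul_const ℓ).add_const x
  have hφ0 : ((-(0:ℝ) / s + k) • ℓ + x) = Amap N ℓ x := by
    rw [Amap_apply]
    simp only [neg_zero, zero_div, zero_add, hk]
    exact add_comm _ _
  have h2 := (hasFDerivAt_groundStateW hN (Amap N ℓ x)).comp_hasDerivAt_of_eq 0 hφ hφ0.symm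
  have hfun : (fun t : ℝ => travelingW N ℓ t x)
      = (fun t : ℝ => groundStateW N ((-t / s + k) • ℓ + x)) := by
    funext t; rw [travelingW]
  rw [hfun]
  refine h2.congr_deriv ?_
  simp only [ContinuousLinearMap.smul_apply, innerSL_apply_apply, real_inner_smul_right, smul_eq_mul]

lemma rpow_half_sq (hN : 3 ≤ N) (y : EuclideanSpace ℝ (Fin N)) :
    (gg N y ^ (-(N:ℝ)/2)) ^ 2 = ((gg N y) ^ N)⁻¹ := by
  have hg := gg_pos hN y
  rw [sq, ← Real.rpow_add hg]
  have : -(N:ℝ)/2 + -(N:ℝ)/2 = -(N:ℝ) := by ring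
  rw [this, Real.rpow_neg hg.le, Real.rpow_natCast]

lemma F_eq (hN : 3 ≤ N) (ℓ : EuclideanSpace ℝ (Fin N)) (hℓ : ‖ℓ‖ < 1)
    (x : EuclideanSpace ℝ (Fin N)) :
    ‖fderiv ℝ (travelingW N ℓ 0) x‖ ^ 2 + (deriv (fun t => travelingW N ℓ t x) 0) ^ 2
    = ((N:ℝ)^2)⁻¹ * ((gg N (Amap N ℓ x))^N)⁻¹ *
        (‖Amap N ℓ (Amap N ℓ x)‖^2 + (1 - ‖ℓ‖^2)⁻¹ * ⟪ℓ, Amap N ℓ x⟫^2) := by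
  have hs2 : Real.sqrt (1 - ‖ℓ‖^2) ^ 2 = 1 - ‖ℓ‖^2 :=
    Real.sq_sqrt (by nlinarith [norm_nonneg ℓ])
  rw [(hasFDerivAt_travelingW0 hN ℓ x).fderiv, (hasDerivAt_travelingW_t hN ℓ x).deriv]
  rw [norm_smul, mul_pow, Real.norm_eq_abs, sq_abs, innerSL_apply_norm]
  rw [mul_pow (-(N:ℝ)⁻¹ * gg N (Amap N ℓ x) ^ (-(N:ℝ)/2))]
  have ha2 : (-(N:ℝ)⁻¹ * gg N (Amap N ℓ x) ^ (-(N:ℝ)/2)) ^ 2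
      = ((N:ℝ)^2)⁻¹ * ((gg N (Amap N ℓ x))^N)⁻¹ := by
    rw [mul_pow, neg_pow, rpow_half_sq hN]
    norm_num [inv_pow]
  rw [ha2, real_inner_comm ℓ (Amap N ℓ x)]
  have hinv : (-(Real.sqrt (1 - ‖ℓ‖ ^ 2))⁻¹ * ⟪ℓ, Amap N ℓ x⟫) ^ 2
      = (1 - ‖ℓ‖^2)⁻¹ * ⟪ℓ, Amap N ℓ x⟫^2 := by
    rw [mul_pow, neg_pow, ← hs2]
    norm_num [inv_pow]
  rw [hinv]
  ring

lemma fderivW_norm_sq (hN : 3 ≤ N) (x : EuclideanSpace ℝ (Fin N)) :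
    ‖fderiv ℝ (groundStateW N) x‖ ^ 2 = ((N:ℝ)^2)⁻¹ * ((gg N x)^N)⁻¹ * ‖x‖^2 := by
  rw [(hasFDerivAt_groundStateW hN x).fderiv, norm_smul, mul_pow, Real.norm_eq_abs, sq_abs,
    innerSL_apply_norm, mul_pow, neg_pow, rpow_half_sq hN]
  norm_num [inv_pow]

lemma continuous_gg : Continuous (gg N) :=
  continuous_const.add ((continuous_norm.pow 2).div_const _)

lemma continuous_ggNinv (hN : 3 ≤ N) :
    Continuous (fun v : EuclideanSpace ℝ (Fin N) => ((gg N v)^N)⁻¹) :=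
  (continuous_gg.pow N).inv₀ (fun v => (pow_pos (gg_pos hN v) N).ne')

lemma integrable_K (hN : 3 ≤ N) :
    Integrable (fun v : EuclideanSpace ℝ (Fin N) => ((gg N v)^N)⁻¹ * ‖v‖^2) := by
  obtain ⟨m, rfl⟩ : ∃ m, N = m + 1 := ⟨N-1, by omega⟩
  set N := m + 1
  set c : ℝ := (N : ℝ) * ((N : ℝ) - 2) with hcdef
  have hc : (0:ℝ) < c := c_pos hN
  set M : ℝ := c * (2*(1+c))^m with hMdef
  have hnr : (Module.finrank ℝ (EuclideanSpace ℝ (Fin N)) : ℝ) < ((2*m : ℕ) : ℝ) := by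
    rw [finrank_euclideanSpace_fin]
    have : N + 1 ≤ 2*m := by omega
    exact_mod_cast Nat.lt_of_succ_le this
  have hint := (integrable_one_add_norm (E := EuclideanSpace ℝ (Fin N))
      (μ := volume) hnr).const_mul M
  refine hint.mono' ?_ ?_
  · exact (((continuous_ggNinv hN).mul (continuous_norm.pow 2))).aestronglyMeasurable
  · filter_upwards with v
    have hg1 : 1 ≤ gg N v := one_le_gg hN v
    have hg : 0 < gg N v := gg_pos hN v
    have hb : ‖v‖^2 ≤ c * gg N v := by
      have hgdef : gg N v = 1 + ‖v‖^2 / c := rfl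
      rw [hgdef, mul_add, mul_div_cancel₀ _ hc.ne']
      nlinarith
    have h2 : (1 + ‖v‖)^2 ≤ 2*(1+c) * gg N v := by
      nlinarith [norm_nonneg v, sq_nonneg (1 - ‖v‖)]
    have hpow : ((1 + ‖v‖)^2)^m ≤ (2*(1+c) * gg N v)^m :=
      pow_le_pow_left₀ (by positivity) h2 m
    have key : ‖v‖^2 * ((1 + ‖v‖)^2)^m ≤ M * (gg N v)^N := by
      calc ‖v‖^2 * ((1 + ‖v‖)^2)^m
          ≤ (c * gg N v) * ((2*(1+c)) * gg N v)^m :=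
            mul_le_mul hb hpow (by positivity) (by positivity)
        _ = M * (gg N v)^N := by
            rw [mul_pow, hMdef, pow_succ]
            ring
    have hrpow : ((1:ℝ) + ‖v‖) ^ (-((2*m : ℕ) : ℝ)) = (((1+‖v‖)^(2*m : ℕ) : ℝ))⁻¹ := by
      rw [Real.rpow_neg (by positivity), Real.rpow_natCast]
    rw [Real.norm_eq_abs, abs_of_nonneg (by positivity), hrpow]
    calc ((gg N v)^N)⁻¹ * ‖v‖^2 = ‖v‖^2 / (gg N v)^N := by ring
      _ ≤ M / ((1+‖v‖)^2)^m := by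
          rw [div_le_div_iff₀ (by positivity) (by positivity)]
          exact key
      _ = M * ((1+‖v‖)^(2*m))⁻¹ := by rw [pow_mul, div_eq_mul_inv]

lemma norm_sq_eq (v : EuclideanSpace ℝ (Fin N)) : ‖v‖^2 = ∑ i, (v i)^2 := by
  rw [EuclideanSpace.norm_eq, Real.sq_sqrt (by positivity)]
  simp [sq_abs]

lemma coord_sq_le (v : EuclideanSpace ℝ (Fin N)) (i : Fin N) : (v i)^2 ≤ ‖v‖^2 := by
  rw [norm_sq_eq]
  exact Finset.single_le_sum (f := fun j => (v j)^2) (fun j _ => sq_nonneg _) (Finset.mem_univ i)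

lemma continuous_coord (i : Fin N) : Continuous (fun v : EuclideanSpace ℝ (Fin N) => v i) :=
  (EuclideanSpace.proj (𝕜 := ℝ) i).continuous

lemma integrable_Ki (hN : 3 ≤ N) (i : Fin N) :
    Integrable (fun v : EuclideanSpace ℝ (Fin N) => ((gg N v)^N)⁻¹ * (v i)^2) := by
  refine (integrable_K hN).mono' ?_ ?_
  · exact ((continuous_ggNinv hN).mul ((continuous_coord i).pow 2)).aestronglyMeasurable
  · filter_upwards with v
    have hg : 0 < gg N v := gg_pos hN v
    rw [Real.norm_eq_abs, abs_of_nonneg (by positivity)]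
    exact mul_le_mul_of_nonneg_left (coord_sq_le v i) (by positivity)

lemma integral_coord_sq [NeZero N] (hN : 3 ≤ N) (i : Fin N) :
    ∫ v : EuclideanSpace ℝ (Fin N), ((gg N v)^N)⁻¹ * (v i)^2
      = ∫ v : EuclideanSpace ℝ (Fin N), ((gg N v)^N)⁻¹ * (v 0)^2 := by
  set P := LinearIsometryEquiv.piLpCongrLeft 2 ℝ ℝ (Equiv.swap (0 : Fin N) i) with hP
  have := MeasureTheory.integral_comp P
    (fun v : EuclideanSpace ℝ (Fin N) => ((gg N v)^N)⁻¹ * (v 0)^2)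
  rw [← this]
  congr 1
  funext v
  have hnorm : ‖(P v : EuclideanSpace ℝ (Fin N))‖ = ‖v‖ := P.norm_map v
  have hco : (P v : EuclideanSpace ℝ (Fin N)) 0 = v i := by
    rw [hP, LinearIsometryEquiv.piLpCongrLeft_apply]
    simp only [Equiv.piCongrLeft'_apply, Equiv.symm_swap]
    rw [Equiv.swap_apply_left]
  rw [show gg N (P v) = gg N v from by rw [gg, gg, hnorm], hco]

lemma integral_K_eq_sum [NeZero N] (hN : 3 ≤ N) :
    ∫ v : EuclideanSpace ℝ (Fin N), ((gg N v)^N)⁻¹ * ‖v‖^2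
      = N * ∫ v : EuclideanSpace ℝ (Fin N), ((gg N v)^N)⁻¹ * (v 0)^2 := by
  have h1 : (fun v : EuclideanSpace ℝ (Fin N) => ((gg N v)^N)⁻¹ * ‖v‖^2)
      = fun v => ∑ i, ((gg N v)^N)⁻¹ * (v i)^2 := by
    funext v; rw [norm_sq_eq, Finset.mul_sum]
  rw [h1, integral_finset_sum _ (fun i _ => integrable_Ki hN i)]
  rw [Finset.sum_congr rfl (fun i _ => integral_coord_sq hN i)]
  simp [Finset.card_univ, nsmul_eq_mul]

noncomputable def Dmap (N : ℕ) [NeZero N] (a : ℝ) :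
    EuclideanSpace ℝ (Fin N) →L[ℝ] EuclideanSpace ℝ (Fin N) :=
  ContinuousLinearMap.id ℝ _ +
    (a • innerSL ℝ (EuclideanSpace.single (0 : Fin N) (1:ℝ))).smulRight
      (EuclideanSpace.single (0 : Fin N) (1:ℝ))

lemma Dmap_apply [NeZero N] (a : ℝ) (u : EuclideanSpace ℝ (Fin N)) :
    Dmap N a u = u + (a * u 0) • EuclideanSpace.single (0 : Fin N) (1:ℝ) := by
  simp [Dmap, ContinuousLinearMap.smulRight_apply, EuclideanSpace.inner_single_left, mul_smul]

lemma det_Dmap [NeZero N] (a : ℝ) :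
    LinearMap.det ((Dmap N a : EuclideanSpace ℝ (Fin N) →L[ℝ] _) :
      EuclideanSpace ℝ (Fin N) →ₗ[ℝ] EuclideanSpace ℝ (Fin N)) = 1 + a := by
  classical
  set b := (EuclideanSpace.basisFun (Fin N) ℝ).toBasis
  rw [← LinearMap.det_toMatrix b]
  have hM : LinearMap.toMatrix b b ((Dmap N a : _ →L[ℝ] _) : _ →ₗ[ℝ] _)
      = Matrix.diagonal (fun i : Fin N => if i = 0 then 1 + a else 1) := by
    ext i j
    rw [LinearMap.toMatrix_apply]
    simp only [b, OrthonormalBasis.coe_toBasis, EuclideanSpace.basisFun_apply,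
      OrthonormalBasis.coe_toBasis_repr_apply, EuclideanSpace.basisFun_repr,
      ContinuousLinearMap.coe_coe, Dmap_apply, EuclideanSpace.single_apply,
      PiLp.add_apply, PiLp.smul_apply, smul_eq_mul, Matrix.diagonal]
    by_cases h1 : i = j <;> by_cases h2 : i = 0 <;> by_cases h3 : j = 0 <;>
      simp_all <;> ring
  rw [hM, Matrix.det_diagonal]
  rw [Finset.prod_ite_eq' Finset.univ (0 : Fin N) (fun _ => 1 + a)]
  simp

lemma integral_comp_Dmap [NeZero N] {a : ℝ} (ha : 0 < 1 + a)
    (f : EuclideanSpace ℝ (Fin N) → ℝ) (hf : Continuous f) :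
    ∫ u : EuclideanSpace ℝ (Fin N), f (Dmap N a u)
      = (1+a)⁻¹ * ∫ v : EuclideanSpace ℝ (Fin N), f v := by
  have hdet := det_Dmap (N := N) a
  have hmap := Measure.map_linearMap_addHaar_eq_smul_addHaar (μ := volume)
    (f := ((Dmap N a : EuclideanSpace ℝ (Fin N) →L[ℝ] EuclideanSpace ℝ (Fin N)) :
      EuclideanSpace ℝ (Fin N) →ₗ[ℝ] EuclideanSpace ℝ (Fin N))) (by rw [hdet]; exact ha.ne')
  have hco : ⇑(((Dmap N a : EuclideanSpace ℝ (Fin N) →L[ℝ] EuclideanSpace ℝ (Fin N))) :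
      EuclideanSpace ℝ (Fin N) →ₗ[ℝ] EuclideanSpace ℝ (Fin N)) = ⇑(Dmap N a) := rfl
  rw [hco] at hmap
  have h2 : ∫ u : EuclideanSpace ℝ (Fin N), f (Dmap N a u)
      = ∫ v, f v ∂(Measure.map (⇑(Dmap N a)) volume) := by
    rw [integral_map (Dmap N a).continuous.aemeasurable hf.aestronglyMeasurable]
  rw [h2, hmap, hdet, integral_smul_measure, ENNReal.toReal_ofReal (by positivity), smul_eq_mul,
    abs_of_pos (by positivity)]

lemma integral_K_pos [NeZero N] (hN : 3 ≤ N) :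
    0 < ∫ v : EuclideanSpace ℝ (Fin N), ((gg N v)^N)⁻¹ * ‖v‖^2 := by
  rw [integral_pos_iff_support_of_nonneg]
  · have hsub : ({(0 : EuclideanSpace ℝ (Fin N))}ᶜ : Set _) ⊆
        Function.support (fun v : EuclideanSpace ℝ (Fin N) => ((gg N v)^N)⁻¹ * ‖v‖^2) := by
      intro v hv
      have hv0 : v ≠ 0 := hv
      have hg := gg_pos hN v
      have : 0 < ‖v‖ := norm_pos_iff.2 hv0
      exact ne_of_gt (by positivity)
    refine lt_of_lt_of_le ?_ (measure_mono hsub)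
    refine (isOpen_compl_singleton).measure_pos volume ?_
    refine ⟨EuclideanSpace.single (0 : Fin N) (1:ℝ), ?_⟩
    intro h
    have := congrFun (congrArg (fun w : EuclideanSpace ℝ (Fin N) => (w : Fin N → ℝ)) h) 0
    simp [EuclideanSpace.single_apply] at this
  · intro v
    have hg := gg_pos hN v
    positivity
  · exact integrable_K hN

lemma Dmap_coord [NeZero N] (a : ℝ) (w : EuclideanSpace ℝ (Fin N)) :
    (Dmap N a w) 0 = (1+a) * w 0 := by
  rw [Dmap_apply]
  simp [EuclideanSpace.single_apply]
  ring

lemma norm_Dmap_sq [NeZero N] (a : ℝ) (w : EuclideanSpace ℝ (Fin N)) :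
    ‖Dmap N a w‖^2 = ‖w‖^2 + ((1+a)^2 - 1) * (w 0)^2 := by
  rw [Dmap_apply, norm_add_sq_real, real_inner_smul_right, norm_smul,
    EuclideanSpace.inner_single_right, EuclideanSpace.norm_single]
  simp only [RCLike.star_def, conj_trivial, Real.norm_eq_abs, norm_one]
  rw [mul_pow, sq_abs]
  ring

lemma Hnorm_identity (hN : 3 ≤ N) (ℓ : EuclideanSpace ℝ (Fin N)) (hℓ : ‖ℓ‖ < 1) :
    ∫ x : EuclideanSpace ℝ (Fin N),
        (‖fderiv ℝ (travelingW N ℓ 0) x‖ ^ 2 + (deriv (fun t => travelingW N ℓ t x) 0) ^ 2)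
      = ((N + (2 - (N : ℝ)) * ‖ℓ‖ ^ 2) / (N * Real.sqrt (1 - ‖ℓ‖ ^ 2))) *
          (((N:ℝ)^2)⁻¹ * ∫ v : EuclideanSpace ℝ (Fin N), ((gg N v)^N)⁻¹ * ‖v‖^2) := by
  haveI : NeZero N := ⟨by omega⟩
  have hN0 : (N:ℝ) ≠ 0 := by positivity
  have hr0 : (0:ℝ) ≤ ‖ℓ‖ := norm_nonneg ℓ
  have h1r : (0:ℝ) < 1 - ‖ℓ‖^2 := by nlinarith
  have hs0 : 0 < Real.sqrt (1 - ‖ℓ‖^2) := Real.sqrt_pos.2 h1r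
  have hs2 : Real.sqrt (1 - ‖ℓ‖^2)^2 = 1 - ‖ℓ‖^2 := Real.sq_sqrt h1r.le
  set s := Real.sqrt (1 - ‖ℓ‖^2) with hsdef
  simp only [F_eq hN ℓ hℓ]
  by_cases hℓ0 : ℓ = 0
  · subst hℓ0
    have hA : ∀ x : EuclideanSpace ℝ (Fin N), Amap N 0 x = x := by
      intro x; rw [Amap_apply]; simp
    simp only [hA, inner_zero_left, norm_zero]
    norm_num
    have hs1 : s = 1 := by rw [hsdef]; norm_num
    rw [hs1, mul_one, div_self hN0, one_mul]
    simp only [mul_assoc]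
    rw [MeasureTheory.integral_const_mul]
  · have hrpos : (0:ℝ) < ‖ℓ‖ := norm_pos_iff.2 hℓ0
    -- orthonormal basis with b 0 = ‖ℓ‖⁻¹ • ℓ
    have hcard : Module.finrank ℝ (EuclideanSpace ℝ (Fin N)) = Fintype.card (Fin N) := by
      simp [finrank_euclideanSpace_fin]
    have honb : Orthonormal ℝ
        (Set.restrict {(0 : Fin N)} (fun _ : Fin N => (‖ℓ‖⁻¹ • ℓ : EuclideanSpace ℝ (Fin N)))) := by
      constructor
      · intro i
        show ‖(‖ℓ‖⁻¹ • ℓ : EuclideanSpace ℝ (Fin N))‖ = 1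
        rw [norm_smul, norm_inv, Real.norm_eq_abs, abs_of_pos hrpos, inv_mul_cancel₀ hrpos.ne']
      · intro i j hij
        exact absurd (Subtype.ext (by
          have hi := i.2; have hj := j.2
          simp only [Set.mem_singleton_iff] at hi hj
          rw [hi, hj])) hij
    obtain ⟨b, hb⟩ := honb.exists_orthonormalBasis_extension_of_card_eq hcard
    have hb0 : b 0 = ‖ℓ‖⁻¹ • ℓ := hb 0 rfl
    set R := b.repr.symm with hRdef
    have hR1 : R (EuclideanSpace.single (0 : Fin N) (1:ℝ)) = ‖ℓ‖⁻¹ • ℓ := by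
      rw [hRdef, b.repr_symm_single, hb0]
    have hRℓ : R (‖ℓ‖ • EuclideanSpace.single (0 : Fin N) (1:ℝ)) = ℓ := by
      rw [_root_.map_smul, hR1, smul_smul, mul_inv_cancel₀ hrpos.ne', one_smul]
    have hinner : ∀ u : EuclideanSpace ℝ (Fin N), ⟪ℓ, R u⟫ = ‖ℓ‖ * u 0 := by
      intro u
      conv_lhs => rw [← hRℓ]
      rw [LinearIsometryEquiv.inner_map_map, real_inner_smul_left,
        EuclideanSpace.inner_single_left]
      norm_num
    set a : ℝ := s⁻¹ - 1 with hadef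
    have h1a : 1 + a = s⁻¹ := by rw [hadef]; ring
    have hAR : ∀ u : EuclideanSpace ℝ (Fin N),
        Amap N ℓ (R u) = R (Dmap N a u) := by
      intro u
      rw [Amap_apply, Dmap_apply, _root_.map_add, hinner u]
      congr 1
      rw [_root_.map_smul, hR1, smul_smul]
      congr 1
      rw [hadef, ← hsdef]
      field_simp
    -- change of variables by R
    rw [← MeasureTheory.integral_comp R (fun y => ((N:ℝ)^2)⁻¹ * ((gg N (Amap N ℓ y))^N)⁻¹ *
      (‖Amap N ℓ (Amap N ℓ y)‖^2 + (1 - ‖ℓ‖^2)⁻¹ * ⟪ℓ, Amap N ℓ y⟫^2))]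
    have hggR : ∀ v : EuclideanSpace ℝ (Fin N), gg N (R v) = gg N v := by
      intro v; rw [gg, gg, LinearIsometryEquiv.norm_map]
    have hpoint : ∀ u : EuclideanSpace ℝ (Fin N),
        ((N:ℝ)^2)⁻¹ * ((gg N (Amap N ℓ (R u)))^N)⁻¹ *
          (‖Amap N ℓ (Amap N ℓ (R u))‖^2 + (1 - ‖ℓ‖^2)⁻¹ * ⟪ℓ, Amap N ℓ (R u)⟫^2)
        = ((N:ℝ)^2)⁻¹ * ((gg N (Dmap N a u))^N)⁻¹ *
          (‖Dmap N a u‖^2 + (2 * ((1 - ‖ℓ‖^2)⁻¹ - 1)) * ((Dmap N a u) 0)^2) := by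
      intro u
      rw [hAR u, hAR (Dmap N a u), hggR, LinearIsometryEquiv.norm_map, hinner]
      congr 1
      rw [norm_Dmap_sq, mul_pow]
      have hγ2 : (1+a)^2 = (1 - ‖ℓ‖^2)⁻¹ := by
        rw [h1a, ← hs2]
        norm_num [inv_pow]
      rw [hγ2]
      have : (1 - ‖ℓ‖^2)⁻¹ * (‖ℓ‖^2 * ((Dmap N a u) 0)^2)
          = ((1 - ‖ℓ‖^2)⁻¹ - 1) * ((Dmap N a u) 0)^2 := by
        field_simp
        ring
      rw [this]
      ring
    simp only [hpoint]
    -- change of variables by Dmap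
    have hcont : Continuous (fun v : EuclideanSpace ℝ (Fin N) =>
        ((N:ℝ)^2)⁻¹ * ((gg N v)^N)⁻¹ *
          (‖v‖^2 + (2 * ((1 - ‖ℓ‖^2)⁻¹ - 1)) * (v 0)^2)) := by
      apply Continuous.mul
      · exact continuous_const.mul (continuous_ggNinv hN)
      · exact (continuous_norm.pow 2).add
          (continuous_const.mul ((continuous_coord 0).pow 2))
    have ha0 : 0 < 1 + a := by rw [h1a]; positivity
    rw [integral_comp_Dmap ha0 _ hcont, h1a]
    -- split the integral
    have hsplit : ∀ v : EuclideanSpace ℝ (Fin N),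
        ((N:ℝ)^2)⁻¹ * ((gg N v)^N)⁻¹ *
          (‖v‖^2 + (2 * ((1 - ‖ℓ‖^2)⁻¹ - 1)) * (v 0)^2)
        = ((N:ℝ)^2)⁻¹ * (((gg N v)^N)⁻¹ * ‖v‖^2)
          + (((N:ℝ)^2)⁻¹ * (2 * ((1 - ‖ℓ‖^2)⁻¹ - 1))) * (((gg N v)^N)⁻¹ * (v 0)^2) := by
      intro v; ring
    simp only [hsplit]
    rw [MeasureTheory.integral_add (((integrable_K hN).const_mul _))
      ((integrable_Ki hN 0).const_mul _), MeasureTheory.integral_const_mul,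
      MeasureTheory.integral_const_mul]
    have hJ : ∫ v : EuclideanSpace ℝ (Fin N), ((gg N v)^N)⁻¹ * (v 0)^2
        = (∫ v : EuclideanSpace ℝ (Fin N), ((gg N v)^N)⁻¹ * ‖v‖^2) / N := by
      rw [integral_K_eq_sum hN]
      field_simp
    rw [hJ]
    have hr2 : ‖ℓ‖^2 = 1 - s^2 := by rw [hs2]; ring
    rw [hr2]
    field_simp
    ring

lemma Hnorm_base (hN : 3 ≤ N) :
    ∫ x : EuclideanSpace ℝ (Fin N), ‖fderiv ℝ (groundStateW N) x‖^2
      = ((N:ℝ)^2)⁻¹ * ∫ v : EuclideanSpace ℝ (Fin N), ((gg N v)^N)⁻¹ * ‖v‖^2 := by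
  simp only [fderivW_norm_sq hN, mul_assoc]
  rw [MeasureTheory.integral_const_mul]

end TW

open TW in
/-- `‖(W_ℓ(0), ∂_t W_ℓ(0))‖²_𝓗 = ((N + (2-N)|ℓ|²)/(N√(1-|ℓ|²))) ‖W‖²_{Ḣ¹}`; in
particular this quantity tends to `+∞` as `|ℓ| → 1`. -/
theorem travelingW_Hnorm_sq (N : ℕ) (hN : 3 ≤ N) :
    (∀ ℓ : EuclideanSpace ℝ (Fin N), ‖ℓ‖ < 1 →
      travelingWHnormSq N ℓ
        = ((N + (2 - (N : ℝ)) * ‖ℓ‖ ^ 2) / (N * Real.sqrt (1 - ‖ℓ‖ ^ 2)))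
          * ∫ x : EuclideanSpace ℝ (Fin N), ‖fderiv ℝ (groundStateW N) x‖ ^ 2)
    ∧ Tendsto (travelingWHnormSq N)
        (Filter.comap (fun ℓ : EuclideanSpace ℝ (Fin N) => ‖ℓ‖) (𝓝[<] 1))
        atTop := by
  haveI : NeZero N := ⟨by omega⟩
  have hN0 : (N:ℝ) ≠ 0 := by positivity
  have part1 : ∀ ℓ : EuclideanSpace ℝ (Fin N), ‖ℓ‖ < 1 →
      travelingWHnormSq N ℓ
        = ((N + (2 - (N : ℝ)) * ‖ℓ‖ ^ 2) / (N * Real.sqrt (1 - ‖ℓ‖ ^ 2)))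
          * ∫ x : EuclideanSpace ℝ (Fin N), ‖fderiv ℝ (groundStateW N) x‖ ^ 2 := by
    intro ℓ hℓ
    rw [travelingWHnormSq, Hnorm_identity hN ℓ hℓ, Hnorm_base hN]
  refine ⟨part1, ?_⟩
  set C := ∫ x : EuclideanSpace ℝ (Fin N), ‖fderiv ℝ (groundStateW N) x‖ ^ 2 with hC
  have hCpos : 0 < C := by
    rw [hC, Hnorm_base hN]
    exact mul_pos (by positivity) (integral_K_pos hN)
  have hmem : {ℓ : EuclideanSpace ℝ (Fin N) | ‖ℓ‖ < 1} ∈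
      Filter.comap (fun ℓ : EuclideanSpace ℝ (Fin N) => ‖ℓ‖) (𝓝[<] 1) :=
    Filter.preimage_mem_comap self_mem_nhdsWithin
  have hev : (fun ℓ : EuclideanSpace ℝ (Fin N) =>
        ((N + (2 - (N : ℝ)) * ‖ℓ‖ ^ 2) / (N * Real.sqrt (1 - ‖ℓ‖ ^ 2))) * C)
      =ᶠ[Filter.comap (fun ℓ : EuclideanSpace ℝ (Fin N) => ‖ℓ‖) (𝓝[<] 1)]
      travelingWHnormSq N := by
    filter_upwards [hmem] with ℓ hℓ
    exact (part1 ℓ hℓ).symm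
  refine Tendsto.congr' hev ?_
  have h1 : Tendsto (fun ℓ : EuclideanSpace ℝ (Fin N) => ‖ℓ‖)
      (Filter.comap (fun ℓ : EuclideanSpace ℝ (Fin N) => ‖ℓ‖) (𝓝[<] 1)) (𝓝[<] 1) :=
    tendsto_comap
  have h2 : Tendsto (fun r : ℝ => Real.sqrt (1 - r^2)) (𝓝[<] 1) (𝓝[>] 0) := by
    rw [tendsto_nhdsWithin_iff]
    constructor
    · have hcont : Continuous fun r : ℝ => Real.sqrt (1 - r^2) :=
        (continuous_const.sub (continuous_pow 2)).sqrt
      have := hcont.tendsto 1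
      norm_num at this
      exact this.mono_left nhdsWithin_le_nhds
    · filter_upwards [Ioo_mem_nhdsLT_of_mem (show (1:ℝ) ∈ Set.Ioc 0 1 by norm_num)] with r hr
      have : 0 < 1 - r^2 := by nlinarith [hr.1, hr.2]
      exact Real.sqrt_pos.2 this
  have h3 : Tendsto (fun r : ℝ => (Real.sqrt (1 - r^2))⁻¹) (𝓝[<] 1) atTop :=
    tendsto_inv_nhdsGT_zero.comp h2
  have h4 : Tendsto (fun r : ℝ => (N + (2 - (N:ℝ))*r^2) * C / N) (𝓝[<] 1) (𝓝 (2*C/N)) := by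
    have hcont : Continuous fun r : ℝ => ((N:ℝ) + (2 - (N:ℝ))*r^2) * C / N := by
      continuity
    have := (hcont.tendsto 1).mono_left (nhdsWithin_le_nhds (s := Set.Iio (1:ℝ)))
    convert this using 2
    ring
  have h5 : Tendsto (fun r : ℝ =>
      ((N + (2 - (N:ℝ))*r^2) * C / N) * (Real.sqrt (1 - r^2))⁻¹) (𝓝[<] 1) atTop :=
    Filter.Tendsto.pos_mul_atTop (by positivity) h4 h3
  have hψeq : ∀ r : ℝ, (((N:ℝ) + (2 - (N:ℝ))*r^2) * C / N) * (Real.sqrt (1 - r^2))⁻¹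
      = ((N + (2 - (N:ℝ))*r^2) / (N * Real.sqrt (1 - r^2))) * C := by
    intro r
    rw [div_eq_mul_inv, div_eq_mul_inv, mul_inv]
    ring
  simp only [hψeq] at h5
  exact h5.comp h1
end

section
/- Let N = 5 and F(u) = |u|^{4/3}u on ℝ. There exists C > 0 such that for all real u, v, W with h = u - v: |F(u) - F(v) - F'(W)h| ≤ C |h| (|v - W|^{4/3} + |W|^{1/3}|v - W| + |W|^{1/3}|h| + |h|^{4/3}), where F'(W) = (7/3)|W|^{4/3}. -/
private lemma key_alg (s t r : ℝ) (ht : 0 ≤ t) (hts : t ≤ s) (hr : 0 ≤ r)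
    (h : r^3 = s^3 - t^3) : s^4 - t^4 ≤ 11*r^4 + 4*t*r^3 := by
  have hs : 0 ≤ s := ht.trans hts
  have he : 0 ≤ s - t := sub_nonneg.2 hts
  have h1 : (s-t)^3 ≤ r^3 := by nlinarith [mul_nonneg (mul_nonneg hs ht) he]
  have her : s - t ≤ r := by
    by_contra hc
    push_neg at hc
    exact absurd h1 (not_le.2 (by nlinarith [pow_lt_pow_left₀ hc hr (n := 3) (by norm_num)]))
  have h2 : t^2*(s-t) ≤ r^3 := by
    nlinarith [mul_nonneg he (mul_nonneg hs hs), mul_nonneg he (mul_nonneg hs ht)]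
  have h3 : t*(s-t)^3 ≤ r^4 := by
    rcases le_or_gt t r with hcase | hcase
    · have := mul_le_mul hcase (pow_le_pow_left₀ he her 3) (by positivity) hr
      nlinarith [this]
    · have htpos : 0 < t := lt_of_le_of_lt hr hcase
      have het : s - t ≤ t := her.trans hcase.le
      have e2 : (s-t)^2 ≤ (s-t)*t := by nlinarith [mul_nonneg he he]
      have step : (t^2*(s-t))*((s-t)^2) ≤ r^3*((s-t)*t) :=
        mul_le_mul h2 e2 (sq_nonneg _) (by positivity)
      have step2 : r^3*((s-t)*t) ≤ r^3*(r*t) := by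
        apply mul_le_mul_of_nonneg_left (mul_le_mul_of_nonneg_right her ht) (by positivity)
      have : t*(t*(s-t)^3) ≤ t*r^4 := by nlinarith [step, step2]
      exact le_of_mul_le_mul_left this htpos
  have h4 : (s-t)^4 ≤ r^4 := pow_le_pow_left₀ he her 4
  have h5 : t*(t^2*(s-t)) ≤ t*r^3 := mul_le_mul_of_nonneg_left h2 ht
  have h6 : (t^2*(s-t))*(s-t) ≤ r^3*r := mul_le_mul h2 her he (by positivity)
  have expand : s^4 - t^4 = 4*(t*(t^2*(s-t))) + 6*((t^2*(s-t))*(s-t)) + 4*(t*(s-t)^3) + (s-t)^4 := by ring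
  have hr4 : r^3*r = r^4 := by ring
  linarith [h4, h5, h6, h3]

private lemma rpow_diff (x y : ℝ) (hy : 0 ≤ y) (hxy : y ≤ x) :
    x ^ ((4:ℝ)/3) - y ^ ((4:ℝ)/3) ≤ 11*(x-y) ^ ((4:ℝ)/3) + 4*(y ^ ((1:ℝ)/3))*(x-y) := by
  have hx : 0 ≤ x := hy.trans hxy
  have hd : 0 ≤ x - y := sub_nonneg.2 hxy
  set s := x ^ ((1:ℝ)/3) with hs_def
  set t := y ^ ((1:ℝ)/3) with ht_def
  set r := (x-y) ^ ((1:ℝ)/3) with hr_def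
  have hs3 : s^3 = x := by
    rw [hs_def, ← Real.rpow_natCast (x ^ ((1:ℝ)/3)) 3, ← Real.rpow_mul hx]; norm_num
  have ht3 : t^3 = y := by
    rw [ht_def, ← Real.rpow_natCast (y ^ ((1:ℝ)/3)) 3, ← Real.rpow_mul hy]; norm_num
  have hr3 : r^3 = x - y := by
    rw [hr_def, ← Real.rpow_natCast ((x-y) ^ ((1:ℝ)/3)) 3, ← Real.rpow_mul hd]; norm_num
  have hs4 : s^4 = x ^ ((4:ℝ)/3) := by
    rw [hs_def, ← Real.rpow_natCast (x ^ ((1:ℝ)/3)) 4, ← Real.rpow_mul hx]; norm_num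
  have ht4 : t^4 = y ^ ((4:ℝ)/3) := by
    rw [ht_def, ← Real.rpow_natCast (y ^ ((1:ℝ)/3)) 4, ← Real.rpow_mul hy]; norm_num
  have hr4 : r^4 = (x-y) ^ ((4:ℝ)/3) := by
    rw [hr_def, ← Real.rpow_natCast ((x-y) ^ ((1:ℝ)/3)) 4, ← Real.rpow_mul hd]; norm_num
  have ht0 : 0 ≤ t := Real.rpow_nonneg hy _
  have hr0 : 0 ≤ r := Real.rpow_nonneg hd _
  have hts : t ≤ s := Real.rpow_le_rpow hy hxy (by norm_num)
  have := key_alg s t r ht0 hts hr0 (by rw [hs3, ht3, hr3])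
  rw [hs4, ht4, hr4, hr3] at this
  linarith

private lemma absA (a b : ℝ) :
    |(|a| ^ ((4:ℝ)/3) - |b| ^ ((4:ℝ)/3))| ≤ 11*|a-b| ^ ((4:ℝ)/3) + 4*(|b| ^ ((1:ℝ)/3))*|a-b| := by
  have hab : |(|a| - |b|)| ≤ |a - b| := abs_abs_sub_abs_le_abs_sub a b
  rcases le_total |b| |a| with hc | hc
  · have key := rpow_diff |a| |b| (abs_nonneg b) hc
    have hd : |a| - |b| ≤ |a - b| := le_trans (le_abs_self _) hab
    have hmono : (|a| - |b|) ^ ((4:ℝ)/3) ≤ |a-b| ^ ((4:ℝ)/3) :=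
      Real.rpow_le_rpow (sub_nonneg.2 hc) hd (by norm_num)
    have habs : |(|a| ^ ((4:ℝ)/3) - |b| ^ ((4:ℝ)/3))| = |a| ^ ((4:ℝ)/3) - |b| ^ ((4:ℝ)/3) := by
      rw [abs_of_nonneg]
      exact sub_nonneg.2 (Real.rpow_le_rpow (abs_nonneg b) hc (by norm_num))
    rw [habs]
    have h4 : 4*(|b| ^ ((1:ℝ)/3))*(|a|-|b|) ≤ 4*(|b| ^ ((1:ℝ)/3))*|a-b| := by
      apply mul_le_mul_of_nonneg_left hd (by positivity)
    linarith
  · have key := rpow_diff |b| |a| (abs_nonneg a) hc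
    have hd : |b| - |a| ≤ |a - b| := by
      have := abs_abs_sub_abs_le_abs_sub b a
      rw [abs_sub_comm b a] at this
      exact le_trans (le_abs_self _) this
    have hmono : (|b| - |a|) ^ ((4:ℝ)/3) ≤ |a-b| ^ ((4:ℝ)/3) :=
      Real.rpow_le_rpow (sub_nonneg.2 hc) hd (by norm_num)
    have habs : |(|a| ^ ((4:ℝ)/3) - |b| ^ ((4:ℝ)/3))| = |b| ^ ((4:ℝ)/3) - |a| ^ ((4:ℝ)/3) := by
      rw [abs_sub_comm, abs_of_nonneg]
      exact sub_nonneg.2 (Real.rpow_le_rpow (abs_nonneg a) hc (by norm_num))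
    rw [habs]
    have h13 : |a| ^ ((1:ℝ)/3) ≤ |b| ^ ((1:ℝ)/3) := Real.rpow_le_rpow (abs_nonneg a) hc (by norm_num)
    have h4 : 4*(|a| ^ ((1:ℝ)/3))*(|b|-|a|) ≤ 4*(|b| ^ ((1:ℝ)/3))*|a-b| := by
      apply mul_le_mul (by linarith) hd (sub_nonneg.2 hc) (by positivity)
    linarith

private lemma hasDerivF (x : ℝ) :
    HasDerivAt (fun y : ℝ => |y| ^ ((4:ℝ)/3) * y) (7/3 * |x| ^ ((4:ℝ)/3)) x := by
  rcases lt_trichotomy x 0 with hx | hx | hx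
  · have h1 : HasDerivAt (fun y : ℝ => (-y) ^ ((7:ℝ)/3)) ((7:ℝ)/3 * (-x) ^ ((7:ℝ)/3 - 1) * (-1)) x := by
      exact (Real.hasDerivAt_rpow_const (Or.inl (by linarith : -x ≠ 0))).comp x (hasDerivAt_neg x)
    have h2 := h1.neg
    have heq : (fun y : ℝ => |y| ^ ((4:ℝ)/3) * y) =ᶠ[nhds x] (fun y : ℝ => -((-y) ^ ((7:ℝ)/3))) := by
      filter_upwards [Iio_mem_nhds hx] with y hy
      have hy' : (0:ℝ) < -y := by simpa using hy
      have h73 : (7:ℝ)/3 = 4/3 + 1 := by norm_num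
      rw [abs_of_neg (by simpa using hy), h73, Real.rpow_add_one (ne_of_gt hy') ((4:ℝ)/3)]
      ring
    have := h2.congr_of_eventuallyEq heq
    refine this.congr_deriv ?_
    rw [abs_of_neg hx]
    have : (7:ℝ)/3 - 1 = (4:ℝ)/3 := by norm_num
    rw [this]; ring
  · subst hx
    have hcont : Continuous fun y : ℝ => |y| ^ ((4:ℝ)/3) :=
      continuous_abs.rpow_const (fun y => Or.inr (by norm_num))
    have htend : Filter.Tendsto (fun y : ℝ => |y| ^ ((4:ℝ)/3)) (nhdsWithin 0 {0}ᶜ) (nhds 0) := by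
      have := (hcont.tendsto 0).mono_left (nhdsWithin_le_nhds (s := {0}ᶜ))
      simpa using this
    have hslope : HasDerivAt (fun y : ℝ => |y| ^ ((4:ℝ)/3) * y) 0 0 := by
      rw [hasDerivAt_iff_tendsto_slope]
      apply htend.congr'
      filter_upwards [self_mem_nhdsWithin] with y hy
      have hy0 : y ≠ 0 := hy
      simp [slope_def_field, hy0]
    convert hslope using 1
    simp [Real.zero_rpow (by norm_num : (4:ℝ)/3 ≠ 0)]
  · have h1 : HasDerivAt (fun y : ℝ => y ^ ((7:ℝ)/3)) ((7:ℝ)/3 * x ^ ((7:ℝ)/3 - 1)) x :=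
      Real.hasDerivAt_rpow_const (Or.inl (ne_of_gt hx))
    have heq : (fun y : ℝ => |y| ^ ((4:ℝ)/3) * y) =ᶠ[nhds x] (fun y : ℝ => y ^ ((7:ℝ)/3)) := by
      filter_upwards [Ioi_mem_nhds hx] with y hy
      have h73 : (7:ℝ)/3 = 4/3 + 1 := by norm_num
      rw [abs_of_pos hy, h73, Real.rpow_add_one (ne_of_gt hy) ((4:ℝ)/3)]
    have := h1.congr_of_eventuallyEq heq
    refine this.congr_deriv ?_
    rw [abs_of_pos hx]
    have : (7:ℝ)/3 - 1 = (4:ℝ)/3 := by norm_num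
    rw [this]

private lemma mvt_point (u v : ℝ) (huv : u ≠ v) :
    ∃ c : ℝ, |c - v| ≤ |u - v| ∧
      |u| ^ ((4:ℝ)/3) * u - |v| ^ ((4:ℝ)/3) * v = 7/3 * |c| ^ ((4:ℝ)/3) * (u - v) := by
  have hfc : Continuous fun y : ℝ => |y| ^ ((4:ℝ)/3) * y :=
    (continuous_abs.rpow_const (fun y => Or.inr (by norm_num))).mul continuous_id
  rcases huv.lt_or_gt with hlt | hlt
  · -- u < v
    obtain ⟨c, hc, hceq⟩ := exists_hasDerivAt_eq_slope (fun y : ℝ => |y| ^ ((4:ℝ)/3) * y)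
      (fun y => 7/3 * |y| ^ ((4:ℝ)/3)) hlt hfc.continuousOn (fun x _ => hasDerivF x)
    refine ⟨c, ?_, ?_⟩
    · rw [abs_of_nonpos (by linarith [hc.2] : c - v ≤ 0), abs_of_neg (by linarith : u - v < 0)]
      linarith [hc.1]
    · have hne : v - u ≠ 0 := by intro h; apply huv; linarith
      field_simp at hceq
      nlinarith [hceq]
  · obtain ⟨c, hc, hceq⟩ := exists_hasDerivAt_eq_slope (fun y : ℝ => |y| ^ ((4:ℝ)/3) * y)
      (fun y => 7/3 * |y| ^ ((4:ℝ)/3)) hlt hfc.continuousOn (fun x _ => hasDerivF x)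
    refine ⟨c, ?_, ?_⟩
    · rw [abs_of_nonneg (by linarith [hc.1] : 0 ≤ c - v), abs_of_pos (by linarith : (0:ℝ) < u - v)]
      linarith [hc.2]
    · have hne : u - v ≠ 0 := sub_ne_zero.2 huv
      field_simp at hceq
      nlinarith [hceq]

private lemma cbrt_add (A B : ℝ) (hA : 0 ≤ A) (hB : 0 ≤ B) :
    (A+B) ^ ((4:ℝ)/3) ≤ 3*(A ^ ((4:ℝ)/3) + B ^ ((4:ℝ)/3)) := by
  have hAB : 0 ≤ A + B := by linarith
  set a := A ^ ((1:ℝ)/3) with ha_def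
  set b := B ^ ((1:ℝ)/3) with hb_def
  have ha3 : a^3 = A := by
    rw [ha_def, ← Real.rpow_natCast (A ^ ((1:ℝ)/3)) 3, ← Real.rpow_mul hA]; norm_num
  have hb3 : b^3 = B := by
    rw [hb_def, ← Real.rpow_natCast (B ^ ((1:ℝ)/3)) 3, ← Real.rpow_mul hB]; norm_num
  have ha4 : a^4 = A ^ ((4:ℝ)/3) := by
    rw [ha_def, ← Real.rpow_natCast (A ^ ((1:ℝ)/3)) 4, ← Real.rpow_mul hA]; norm_num
  have hb4 : b^4 = B ^ ((4:ℝ)/3) := by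
    rw [hb_def, ← Real.rpow_natCast (B ^ ((1:ℝ)/3)) 4, ← Real.rpow_mul hB]; norm_num
  have ha0 : 0 ≤ a := Real.rpow_nonneg hA _
  have hb0 : 0 ≤ b := Real.rpow_nonneg hB _
  have hsub : (A+B) ^ ((1:ℝ)/3) ≤ a + b := by
    have hcube : ((A+B) ^ ((1:ℝ)/3))^3 = A + B := by
      rw [← Real.rpow_natCast ((A+B) ^ ((1:ℝ)/3)) 3, ← Real.rpow_mul hAB]; norm_num
    by_contra hcon
    push_neg at hcon
    have : (a+b)^3 < ((A+B) ^ ((1:ℝ)/3))^3 :=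
      pow_lt_pow_left₀ hcon (by positivity) (by norm_num)
    rw [hcube] at this
    nlinarith [mul_nonneg (mul_nonneg ha0 ha0) hb0, mul_nonneg (mul_nonneg hb0 hb0) ha0, ha3, hb3]
  have hsplit : (A+B) ^ ((4:ℝ)/3) = (A+B) ^ ((1:ℝ)/3) * (A+B) := by
    rcases eq_or_lt_of_le hAB with h0 | h0
    · rw [← h0]
      simp [Real.zero_rpow (by norm_num : (4:ℝ)/3 ≠ 0), Real.zero_rpow (by norm_num : (1:ℝ)/3 ≠ 0)]
    · have h43 : (4:ℝ)/3 = 1/3 + 1 := by norm_num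
      rw [h43, Real.rpow_add_one (ne_of_gt h0)]
  rw [hsplit]
  have h1 : (A+B) ^ ((1:ℝ)/3) * (A+B) ≤ (a+b)*(A+B) := mul_le_mul_of_nonneg_right hsub hAB
  have h2 : (a+b)*(a^3+b^3) ≤ 3*(a^4+b^4) := by
    nlinarith [mul_nonneg ha0 hb0, sq_nonneg (a-b), sq_nonneg (a+b), mul_nonneg (mul_nonneg ha0 hb0) (sq_nonneg (a-b))]
  calc (A+B) ^ ((1:ℝ)/3) * (A+B) ≤ (a+b)*(A+B) := h1
    _ = (a+b)*(a^3+b^3) := by rw [ha3, hb3]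
    _ ≤ 3*(a^4+b^4) := h2
    _ = 3*(A ^ ((4:ℝ)/3) + B ^ ((4:ℝ)/3)) := by rw [ha4, hb4]

/-- Pointwise estimate in dimension `N = 5` for `F(u) = |u|^{4/3} u`: with
`h = u - v` and `F'(W) = (7/3)|W|^{4/3}`,
`|F(u) - F(v) - F'(W)h| ≤ C |h| (|v-W|^{4/3} + |W|^{1/3}|v-W| + |W|^{1/3}|h| + |h|^{4/3})`. -/
theorem quintic_difference_estimate :
    ∃ C > 0, ∀ u v W : ℝ,
      |(|u| ^ ((4 : ℝ) / 3) * u - |v| ^ ((4 : ℝ) / 3) * v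
          - 7 / 3 * |W| ^ ((4 : ℝ) / 3) * (u - v))|
        ≤ C * |u - v| *
            (|v - W| ^ ((4 : ℝ) / 3) + |W| ^ ((1 : ℝ) / 3) * |v - W|
              + |W| ^ ((1 : ℝ) / 3) * |u - v| + |u - v| ^ ((4 : ℝ) / 3)) := by
  refine ⟨100, by norm_num, fun u v W => ?_⟩
  rcases eq_or_ne u v with rfl | huv
  · simp
  obtain ⟨c, hcv, hceq⟩ := mvt_point u v huv
  have hLHS : |u| ^ ((4:ℝ)/3) * u - |v| ^ ((4:ℝ)/3) * v - 7/3 * |W| ^ ((4:ℝ)/3) * (u - v)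
      = 7/3 * (|c| ^ ((4:ℝ)/3) - |W| ^ ((4:ℝ)/3)) * (u - v) := by
    rw [hceq]; ring
  rw [hLHS, abs_mul, abs_mul]
  have h73 : |(7:ℝ)/3| = 7/3 := by norm_num
  rw [h73]
  set A := |v - W| with hA_def
  set B := |u - v| with hB_def
  have hA0 : 0 ≤ A := abs_nonneg _
  have hB0 : 0 ≤ B := abs_nonneg _
  have hcW : |c - W| ≤ A + B := by
    calc |c - W| ≤ |c - v| + |v - W| := abs_sub_le c v W
      _ ≤ B + A := add_le_add hcv le_rfl
      _ = A + B := by ring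
  -- bound |(|c|^{4/3} - |W|^{4/3})|
  have hΔ := absA c W
  have hmono : |c - W| ^ ((4:ℝ)/3) ≤ (A+B) ^ ((4:ℝ)/3) :=
    Real.rpow_le_rpow (abs_nonneg _) hcW (by norm_num)
  have hsplit := cbrt_add A B hA0 hB0
  have hW0 : 0 ≤ |W| ^ ((1:ℝ)/3) := Real.rpow_nonneg (abs_nonneg _) _
  have hWcW : |W| ^ ((1:ℝ)/3) * |c - W| ≤ |W| ^ ((1:ℝ)/3) * (A + B) :=
    mul_le_mul_of_nonneg_left hcW hW0
  have hΔ2 : |(|c| ^ ((4:ℝ)/3) - |W| ^ ((4:ℝ)/3))|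
      ≤ 33*(A ^ ((4:ℝ)/3) + B ^ ((4:ℝ)/3)) + 4*(|W| ^ ((1:ℝ)/3))*(A+B) := by
    calc |(|c| ^ ((4:ℝ)/3) - |W| ^ ((4:ℝ)/3))|
        ≤ 11*|c-W| ^ ((4:ℝ)/3) + 4*(|W| ^ ((1:ℝ)/3))*|c-W| := hΔ
      _ ≤ 11*((A+B) ^ ((4:ℝ)/3)) + 4*(|W| ^ ((1:ℝ)/3))*(A+B) := by
          have := mul_le_mul_of_nonneg_left hmono (by norm_num : (0:ℝ) ≤ 11)
          nlinarith [hWcW]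
      _ ≤ 33*(A ^ ((4:ℝ)/3) + B ^ ((4:ℝ)/3)) + 4*(|W| ^ ((1:ℝ)/3))*(A+B) := by linarith
  have hS0 : 0 ≤ A ^ ((4:ℝ)/3) := Real.rpow_nonneg hA0 _
  have hS1 : 0 ≤ B ^ ((4:ℝ)/3) := Real.rpow_nonneg hB0 _
  have hS2 : 0 ≤ |W| ^ ((1:ℝ)/3) * A := mul_nonneg hW0 hA0
  have hS3 : 0 ≤ |W| ^ ((1:ℝ)/3) * B := mul_nonneg hW0 hB0
  have hΔ3 : |(|c| ^ ((4:ℝ)/3) - |W| ^ ((4:ℝ)/3))|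
      ≤ 33*(A ^ ((4:ℝ)/3) + |W| ^ ((1:ℝ)/3)*A + |W| ^ ((1:ℝ)/3)*B + B ^ ((4:ℝ)/3)) := by
    nlinarith [hΔ2]
  calc 7/3 * |(|c| ^ ((4:ℝ)/3) - |W| ^ ((4:ℝ)/3))| * B
      ≤ 7/3 * (33*(A ^ ((4:ℝ)/3) + |W| ^ ((1:ℝ)/3)*A + |W| ^ ((1:ℝ)/3)*B + B ^ ((4:ℝ)/3))) * B := by
        apply mul_le_mul_of_nonneg_right (mul_le_mul_of_nonneg_left hΔ3 (by norm_num)) hB0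
    _ = 77 * B * (A ^ ((4:ℝ)/3) + |W| ^ ((1:ℝ)/3)*A + |W| ^ ((1:ℝ)/3)*B + B ^ ((4:ℝ)/3)) := by ring
    _ ≤ 100 * B * (A ^ ((4:ℝ)/3) + |W| ^ ((1:ℝ)/3)*A + |W| ^ ((1:ℝ)/3)*B + B ^ ((4:ℝ)/3)) := by
        nlinarith [hS0, hS1, hS2, hS3, hB0]
end
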